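/- arXiv:1707.04561 — 6 statements merged into one kernel-verified Lean document; each statement's English description precedes it below -/
import Mathlib

section
/- Let L be a positive integer and let G_1,…,G_L, H_1,…,H_L be 2L mutually independent random variables, where each G_i is exponentially distributed with mean λ_pp > 0 and each H_i is exponentially distributed with mean λ_sp > 0. Fix P_p > 0, N_0 > 0, ζ > 0 and Θ_p ∈ (0,1). Set A = exp(−ζ·N_0/(P_p·λ_pp)) and assume A > (1−Θ_p)^(1/L). Then with P_ST = (P_p·λ_pp/(ζ·λ_sp)) · ( A/(1−Θ_p)^(1/L) − 1 ) (which is positive), the worst-case primary outage probability satisfies 1 − ∏_{i=1}^{L} ( 1 − P( P_p·G_i / (P_ST·H_i + N_0) ≤ ζ ) ) = Θ_p. -/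
open MeasureTheory ProbabilityTheory Real Set
open scoped ENNReal

lemma expMeasure_apply' (r : ℝ) {s : Set ℝ} (hs : MeasurableSet s) :
    expMeasure r s = ∫⁻ x in s, exponentialPDF r x := by
  rw [expMeasure, gammaMeasure, withDensity_apply _ hs]; rfl

lemma expMeasure_Iio_zero (r : ℝ) : expMeasure r (Iio 0) = 0 := by
  rw [expMeasure_apply' r measurableSet_Iio]
  exact lintegral_exponentialPDF_of_nonpos le_rfl

lemma expMeasure_Ioi {r : ℝ} (hr : 0 < r) {t : ℝ} (ht : 0 ≤ t) :
    expMeasure r (Ioi t) = ENNReal.ofReal (Real.exp (-(r * t))) := by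
  have := isProbabilityMeasure_expMeasure hr
  have h1 : expMeasure r (Iic t) = ENNReal.ofReal (1 - Real.exp (-(r * t))) := by
    rw [expMeasure_apply' r measurableSet_Iic, lintegral_exponentialPDF_eq_antiDeriv hr,
      if_pos ht]
  have h2 : (Iic t)ᶜ = Ioi t := compl_Iic
  have h3 := prob_compl_eq_one_sub (μ := expMeasure r) (s := Iic t) measurableSet_Iic
  rw [h2, h1] at h3
  rw [h3]
  have he : Real.exp (-(r * t)) ≤ 1 := by
    rw [Real.exp_le_one_iff]; nlinarith
  rw [show (1 : ℝ≥0∞) = ENNReal.ofReal 1 by simp, ← ENNReal.ofReal_sub _ (by linarith [Real.exp_pos (-(r*t))])]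
  norm_num

set_option maxHeartbeats 1000000 in
lemma expProd_measure (rG rH c k : ℝ) (hrG : 0 < rG) (hrH : 0 < rH)
    (hc : 0 ≤ c) (hk : 0 ≤ k) :
    ((expMeasure rH).prod (expMeasure rG)) {p : ℝ × ℝ | c + k * p.1 < p.2}
      = ENNReal.ofReal (Real.exp (-(rG * c)) * (rH / (rH + rG * k))) := by
  have hb : 0 < rH + rG * k := by positivity
  haveI := isProbabilityMeasure_expMeasure hrG
  haveI := isProbabilityMeasure_expMeasure hrH
  have hS : MeasurableSet {p : ℝ × ℝ | c + k * p.1 < p.2} :=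
    measurableSet_lt (by fun_prop) measurable_snd
  rw [Measure.prod_apply hS]
  have hpre : ∀ h : ℝ, (Prod.mk h ⁻¹' {p : ℝ × ℝ | c + k * p.1 < p.2}) = Ioi (c + k * h) :=
    fun h => rfl
  simp_rw [hpre]
  -- drop the negative part of h
  have hsplit : ∫⁻ h, expMeasure rG (Ioi (c + k * h)) ∂(expMeasure rH)
      = ∫⁻ h in Ici 0, expMeasure rG (Ioi (c + k * h)) ∂(expMeasure rH) := by
    rw [← lintegral_add_compl (fun h => expMeasure rG (Ioi (c + k * h))) measurableSet_Ici,
      compl_Ici, setLIntegral_measure_zero _ _ (expMeasure_Iio_zero rH), add_zero]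
  rw [hsplit]
  have hcong : ∫⁻ h in Ici 0, expMeasure rG (Ioi (c + k * h)) ∂(expMeasure rH)
      = ∫⁻ h in Ici 0, ENNReal.ofReal (Real.exp (-(rG * (c + k * h)))) ∂(expMeasure rH) := by
    apply setLIntegral_congr_fun measurableSet_Ici
    intro h hh
    have hh' : (0:ℝ) ≤ h := hh
    exact expMeasure_Ioi hrG (by positivity)
  rw [hcong]
  have hpdfm : Measurable (gammaPDF 1 rH) := (measurable_gammaPDFReal 1 rH).ennreal_ofReal
  rw [expMeasure, gammaMeasure, restrict_withDensity measurableSet_Ici,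
    lintegral_withDensity_eq_lintegral_mul _ hpdfm (by fun_prop)]
  have hcong2 : ∫⁻ h in Ici 0,
        (gammaPDF 1 rH * fun h => ENNReal.ofReal (Real.exp (-(rG * (c + k * h))))) h
          ∂volume
      = ∫⁻ h in Ici 0,
        ENNReal.ofReal (rH * Real.exp (-(rG * c)) * Real.exp (-((rH + rG * k) * h)))
          ∂volume := by
    apply setLIntegral_congr_fun measurableSet_Ici
    intro h hh
    have : gammaPDF 1 rH h = exponentialPDF rH h := rfl
    rw [Pi.mul_apply, this, exponentialPDF_of_nonneg hh,
      ← ENNReal.ofReal_mul (by positivity)]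
    congr 1
    rw [mul_assoc, mul_assoc, ← Real.exp_add, ← Real.exp_add]
    ring_nf
  rw [hcong2]
  have hint : IntegrableOn (fun h => rH * Real.exp (-(rG * c)) * Real.exp (-((rH + rG * k) * h)))
      (Ici 0) volume := by
    rw [integrableOn_Ici_iff_integrableOn_Ioi]
    have h0 := (exp_neg_integrableOn_Ioi 0 hb).const_mul (rH * Real.exp (-(rG * c)))
    exact h0.congr (by filter_upwards with x using by rw [neg_mul])
  rw [← ofReal_integral_eq_lintegral_ofReal hint (by filter_upwards with h; positivity)]
  congr 1
  rw [integral_Ici_eq_integral_Ioi, integral_const_mul]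
  have : ∫ h in Ioi (0:ℝ), Real.exp (-((rH + rG * k) * h))
      = (rH + rG * k)⁻¹ * Real.exp (-((rH + rG*k) * 0)) := by
    have := integral_comp_mul_left_Ioi (fun x => Real.exp (-x)) 0 hb
    simp only [smul_eq_mul, mul_zero] at this ⊢
    rw [this, integral_exp_neg_Ioi]
  rw [this]
  simp only [mul_zero, neg_zero, Real.exp_zero, mul_one]
  field_simp

theorem max_secondary_power_meets_outage_threshold
    {Ω : Type*} [MeasureSpace Ω] [IsProbabilityMeasure (ℙ : Measure Ω)]
    (L : ℕ) (hL : 0 < L)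
    (G H : Fin L → Ω → ℝ)
    (hGm : ∀ i, Measurable (G i)) (hHm : ∀ i, Measurable (H i))
    (lpp lsp : ℝ) (hlpp : 0 < lpp) (hlsp : 0 < lsp)
    (hG : ∀ i, Measure.map (G i) ℙ = expMeasure lpp⁻¹)
    (hH : ∀ i, Measure.map (H i) ℙ = expMeasure lsp⁻¹)
    (hind : iIndepFun (Sum.elim G H) ℙ)
    (Pp N0 ζ Θp : ℝ) (hPp : 0 < Pp) (hN0 : 0 < N0) (hζ : 0 < ζ)
    (hΘp : Θp ∈ Set.Ioo (0 : ℝ) 1)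
    (A : ℝ) (hA : A = Real.exp (-(ζ * N0 / (Pp * lpp))))
    (hAgt : (1 - Θp) ^ ((L : ℝ)⁻¹) < A)
    (PST : ℝ)
    (hPST : PST = Pp * lpp / (ζ * lsp) * (A / (1 - Θp) ^ ((L : ℝ)⁻¹) - 1)) :
    0 < PST ∧
      1 - ∏ i : Fin L,
        (1 - (ℙ {ω | Pp * G i ω / (PST * H i ω + N0) ≤ ζ}).toReal) = Θp := by
  obtain ⟨hΘ0, hΘ1⟩ := hΘp
  have h1Θ : 0 < 1 - Θp := by linarith
  set B : ℝ := (1 - Θp) ^ ((L : ℝ)⁻¹) with hBdef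
  have hB0 : 0 < B := Real.rpow_pos_of_pos h1Θ _
  have hA0 : 0 < A := hA ▸ Real.exp_pos _
  have hAB : 1 < A / B := (one_lt_div hB0).2 hAgt
  have hPST0 : 0 < PST := by
    rw [hPST]
    have h2 : 0 < Pp * lpp / (ζ * lsp) := by positivity
    nlinarith
  refine ⟨hPST0, ?_⟩
  set c : ℝ := ζ * N0 / Pp with hcdef
  set k : ℝ := ζ * PST / Pp with hkdef
  have hc : 0 ≤ c := by positivity
  have hk : 0 ≤ k := by positivity
  have key : ∀ i, 1 - (ℙ {ω | Pp * G i ω / (PST * H i ω + N0) ≤ ζ}).toReal = B := by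
    intro i
    have hGi := hGm i
    have hHi := hHm i
    have hindep : IndepFun (H i) (G i) ℙ :=
      hind.indepFun (i := Sum.inr i) (j := Sum.inl i) (by simp)
    have hmap : Measure.map (fun ω => (H i ω, G i ω)) ℙ
        = (expMeasure lsp⁻¹).prod (expMeasure lpp⁻¹) := by
      rw [← hH i, ← hG i]
      exact (indepFun_iff_map_prod_eq_prod_map_map hHi.aemeasurable hGi.aemeasurable).1 hindep
    have hFmeas : MeasurableSet {ω | c + k * H i ω < G i ω} :=
      measurableSet_lt (by fun_prop) hGi
    have hPF : ℙ {ω | c + k * H i ω < G i ω}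
        = ENNReal.ofReal (Real.exp (-(lpp⁻¹ * c)) * (lsp⁻¹ / (lsp⁻¹ + lpp⁻¹ * k))) := by
      have hpre : {ω | c + k * H i ω < G i ω}
          = (fun ω => (H i ω, G i ω)) ⁻¹' {p : ℝ × ℝ | c + k * p.1 < p.2} := rfl
      rw [hpre, ← Measure.map_apply (hHi.prodMk hGi)
        (measurableSet_lt (by fun_prop) measurable_snd), hmap]
      exact expProd_measure _ _ _ _ (by positivity) (by positivity) hc hk
    have hHnn : ∀ᵐ ω ∂ℙ, 0 ≤ H i ω := by
      rw [ae_iff]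
      have hs : {ω | ¬ 0 ≤ H i ω} = H i ⁻¹' Iio 0 := by ext ω; simp [not_le]
      rw [hs, ← Measure.map_apply hHi measurableSet_Iio, hH i, expMeasure_Iio_zero]
    have hae : ({ω | Pp * G i ω / (PST * H i ω + N0) ≤ ζ} : Set Ω)
        =ᵐ[ℙ] ({ω | c + k * H i ω < G i ω}ᶜ : Set Ω) := by
      rw [Filter.eventuallyEq_set]
      filter_upwards [hHnn] with ω hω
      have hD : 0 < PST * H i ω + N0 := by positivity
      change Pp * G i ω / (PST * H i ω + N0) ≤ ζ ↔ ¬ (c + k * H i ω < G i ω)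
      rw [not_lt, div_le_iff₀ hD]
      have heq : ζ * (PST * H i ω + N0) = Pp * (c + k * H i ω) := by
        rw [hcdef, hkdef]; field_simp; ring
      rw [heq, mul_le_mul_iff_right₀ hPp]
    have hPE : ℙ {ω | Pp * G i ω / (PST * H i ω + N0) ≤ ζ}
        = 1 - ℙ {ω | c + k * H i ω < G i ω} := by
      rw [measure_congr hae, prob_compl_eq_one_sub hFmeas]
    set v : ℝ := Real.exp (-(lpp⁻¹ * c)) * (lsp⁻¹ / (lsp⁻¹ + lpp⁻¹ * k)) with hvdef
    have hv0 : 0 ≤ v := by positivity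
    have hvle : ENNReal.ofReal v ≤ 1 := hPF ▸ prob_le_one
    rw [hPE, hPF, ENNReal.toReal_sub_of_le hvle ENNReal.one_ne_top, ENNReal.toReal_one,
      ENNReal.toReal_ofReal hv0]
    have hvB : v = B := by
      have hAv : Real.exp (-(lpp⁻¹ * c)) = A := by
        rw [hA, hcdef]; congr 1; field_simp
      have hden : lsp⁻¹ + lpp⁻¹ * k = lsp⁻¹ * (A / B) := by
        rw [hkdef, hPST]
        field_simp
        ring
      rw [hvdef, hAv, hden]
      field_simp
    rw [hvB]; ring
  have hprod : ∏ i : Fin L, (1 - (ℙ {ω | Pp * G i ω / (PST * H i ω + N0) ≤ ζ}).toReal)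
      = B ^ L := by
    rw [Finset.prod_congr rfl fun i _ => key i, Finset.prod_const, Finset.card_univ,
      Fintype.card_fin]
  rw [hprod, hBdef, ← Real.rpow_natCast ((1 - Θp) ^ ((L : ℝ)⁻¹)) L,
    ← Real.rpow_mul h1Θ.le, inv_mul_cancel₀ (Nat.cast_ne_zero.2 hL.ne'), Real.rpow_one]
  ring
end

section
/- Let L be a positive integer, let X be an exponential random variable with mean μ₁ > 0 and Y an independent gamma random variable with shape L and scale μ₂ > 0, with μ₁ > μ₂, and set ω = 1/μ₂ − 1/μ₁ > 0. Then for any P_th > 0, P(X + Y < P_th) = γ(L, P_th/μ₂)/Γ(L) − exp(−P_th/μ₁)·γ(L, ω·P_th)/( Γ(L)·(ω·μ₂)^L ). -/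
open MeasureTheory ProbabilityTheory

/-- Lower incomplete gamma function `γ(a, b) = ∫₀ᵇ t^(a-1) e^(-t) dt`. -/
noncomputable def lowerIncGamma (a b : ℝ) : ℝ :=
  ∫ t in (0 : ℝ)..b, t ^ (a - 1) * Real.exp (-t)

open Real Set
open scoped ENNReal

lemma expMeasure_Iio' {r : ℝ} (hr : 0 < r) (c : ℝ) :
    expMeasure r (Iio c) = ENNReal.ofReal (1 - Real.exp (-(r * c))) := by
  have hP : IsProbabilityMeasure (expMeasure r) := isProbabilityMeasure_expMeasure hr
  have hIic : expMeasure r (Iic c) = ENNReal.ofReal (1 - Real.exp (-(r * c))) := by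
    rw [← ofReal_cdf]
    have := cdf_expMeasure_eq hr c
    rw [this]
    split_ifs with h
    · rfl
    · rw [ENNReal.ofReal_zero]; symm; rw [ENNReal.ofReal_eq_zero]
      have h1 : 1 < Real.exp (-(r * c)) := by
        rw [Real.one_lt_exp_iff]
        nlinarith [not_le.mp h]
      linarith
  have hsing : expMeasure r {c} = 0 := by
    have hac : expMeasure r ≪ volume := by
      rw [expMeasure, gammaMeasure]; exact withDensity_absolutelyContinuous _ _
    exact hac (measure_singleton c)
  have hsplit : expMeasure r (Iic c) = expMeasure r (Iio c) + expMeasure r {c} := by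
    rw [← measure_union (by simp) (measurableSet_singleton c)]
    congr 1
    rw [Set.union_singleton, Set.Iio_insert]
  rw [hsplit, hsing, add_zero] at hIic
  exact hIic

lemma pow_exp_integral (n : ℕ) {β : ℝ} (hβ : 0 < β) (P : ℝ) :
    ∫ y in (0:ℝ)..P, y ^ n * Real.exp (-(β * y)) =
      β⁻¹ ^ (n+1) * ∫ t in (0:ℝ)..(β*P), t ^ n * Real.exp (-t) := by
  have h := intervalIntegral.integral_comp_mul_left (a := (0:ℝ)) (b := P)
    (f := fun t => t ^ n * Real.exp (-t)) hβ.ne'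
  rw [mul_zero] at h
  have key : ∀ y : ℝ, y ^ n * Real.exp (-(β * y))
      = β⁻¹ ^ n * ((β * y) ^ n * Real.exp (-(β * y))) := by
    intro y
    have hb : β⁻¹ ^ n * β ^ n = 1 := by
      rw [← mul_pow, inv_mul_cancel₀ hβ.ne', one_pow]
    calc y ^ n * Real.exp (-(β * y)) = (β⁻¹ ^ n * β ^ n) * y ^ n * Real.exp (-(β * y)) := by
          rw [hb, one_mul]
      _ = β⁻¹ ^ n * ((β * y) ^ n * Real.exp (-(β * y))) := by rw [mul_pow]; ring
  simp_rw [key]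
  rw [intervalIntegral.integral_const_mul, h, smul_eq_mul, ← mul_assoc, ← pow_succ]

lemma lowerIncGamma_nat {L : ℕ} (hL : 0 < L) (b : ℝ) :
    lowerIncGamma L b = ∫ t in (0:ℝ)..b, t ^ (L - 1) * Real.exp (-t) := by
  unfold lowerIncGamma
  have : ∀ t : ℝ, t ^ ((L:ℝ) - 1) = t ^ (L - 1 : ℕ) := by
    intro t
    rw [← Real.rpow_natCast t (L-1), Nat.cast_sub hL, Nat.cast_one]
  simp_rw [this]

theorem power_outage_prob_distinct_scales
    {Ω : Type*} [MeasureSpace Ω] [IsProbabilityMeasure (ℙ : Measure Ω)]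
    (L : ℕ) (hL : 0 < L)
    (X Y : Ω → ℝ) (hXm : Measurable X) (hYm : Measurable Y)
    (μ₁ μ₂ : ℝ) (hμ₂ : 0 < μ₂) (hμ : μ₂ < μ₁)
    (hX : Measure.map X ℙ = expMeasure μ₁⁻¹)
    (hY : Measure.map Y ℙ = gammaMeasure L μ₂⁻¹)
    (hind : IndepFun X Y ℙ)
    (w : ℝ) (hw : w = 1 / μ₂ - 1 / μ₁)
    (Pth : ℝ) (hPth : 0 < Pth) :
    ℙ {ω | X ω + Y ω < Pth} =
      ENNReal.ofReal
        (lowerIncGamma L (Pth / μ₂) / Real.Gamma L -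
          Real.exp (-(Pth / μ₁)) * lowerIncGamma L (w * Pth) /
            (Real.Gamma L * (w * μ₂) ^ L)) := by
  have hμ₁ : 0 < μ₁ := hμ₂.trans hμ
  have hr1 : 0 < μ₁⁻¹ := inv_pos.mpr hμ₁
  have hr2 : 0 < μ₂⁻¹ := inv_pos.mpr hμ₂
  have hwv : w = μ₂⁻¹ - μ₁⁻¹ := by rw [hw]; ring
  have hw0 : 0 < w := by
    rw [hwv]; have := (inv_lt_inv₀ hμ₁ hμ₂).mpr hμ; linarith
  have hLpos : (0:ℝ) < (L:ℝ) := by exact_mod_cast hL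
  haveI hPe : IsProbabilityMeasure (expMeasure μ₁⁻¹) := isProbabilityMeasure_expMeasure hr1
  haveI hPg : IsProbabilityMeasure (gammaMeasure L μ₂⁻¹) := isProbabilityMeasure_gammaMeasure hLpos hr2
  have hs : MeasurableSet {p : ℝ × ℝ | p.1 + p.2 < Pth} :=
    measurableSet_lt (measurable_fst.add measurable_snd) measurable_const
  have hmap : ℙ {ω | X ω + Y ω < Pth}
      = ((expMeasure μ₁⁻¹).prod (gammaMeasure L μ₂⁻¹)) {p : ℝ × ℝ | p.1 + p.2 < Pth} := by
    rw [← hX, ← hY,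
      ← (indepFun_iff_map_prod_eq_prod_map_map hXm.aemeasurable hYm.aemeasurable).mp hind,
      Measure.map_apply (hXm.prodMk hYm) hs]
    rfl
  rw [hmap]
  have hs' : MeasurableSet {p : ℝ × ℝ | p.2 + p.1 < Pth} :=
    measurableSet_lt (measurable_snd.add measurable_fst) measurable_const
  have hswap : ((expMeasure μ₁⁻¹).prod (gammaMeasure L μ₂⁻¹)) {p : ℝ × ℝ | p.1 + p.2 < Pth}
      = ((gammaMeasure L μ₂⁻¹).prod (expMeasure μ₁⁻¹)) {p : ℝ × ℝ | p.2 + p.1 < Pth} := by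
    rw [← Measure.prod_swap, Measure.map_apply measurable_swap hs]
    rfl
  rw [hswap, Measure.prod_apply hs']
  have hpre : ∀ y : ℝ, (Prod.mk y ⁻¹' {p : ℝ × ℝ | p.2 + p.1 < Pth}) = Iio (Pth - y) := by
    intro y; ext x
    simp only [mem_preimage, mem_setOf_eq, mem_Iio]
    constructor <;> intro h <;> linarith
  simp_rw [hpre, expMeasure_Iio' hr1]
  rw [gammaMeasure, lintegral_withDensity_eq_lintegral_mul volume
    (show Measurable (gammaPDF (L:ℝ) μ₂⁻¹) from (measurable_gammaPDFReal _ _).ennreal_ofReal)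
    (by fun_prop : Measurable fun y : ℝ => ENNReal.ofReal (1 - Real.exp (-(μ₁⁻¹ * (Pth - y)))))]
  set F : ℝ → ℝ≥0∞ := fun y =>
    gammaPDF L μ₂⁻¹ y * ENNReal.ofReal (1 - Real.exp (-(μ₁⁻¹ * (Pth - y)))) with hF
  show (∫⁻ y, F y) = _
  set n : ℕ := L - 1 with hn
  have hnL : n + 1 = L := Nat.succ_pred_eq_of_pos hL
  set G : ℝ → ℝ := fun y =>
    (μ₂⁻¹ ^ L / Real.Gamma L * y ^ n * Real.exp (-(μ₂⁻¹ * y))) *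
      (1 - Real.exp (-(μ₁⁻¹ * (Pth - y)))) with hG
  -- kill the complement
  have hcompl : ∫⁻ y in (Ioo (0:ℝ) Pth)ᶜ, F y = 0 := by
    have hz : ∀ᵐ y ∂(volume.restrict (Ioo (0:ℝ) Pth)ᶜ), F y = 0 := by
      rw [ae_restrict_iff' measurableSet_Ioo.compl]
      have h0 : ∀ᵐ y : ℝ ∂volume, y ≠ (0:ℝ) := by
        have : (volume : Measure ℝ) {(0:ℝ)} = 0 := measure_singleton 0
        rw [ae_iff]; simpa using this
      filter_upwards [h0] with y hy hmem
      rcases lt_or_ge y 0 with h | h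
      · simp only [hF]; rw [gammaPDF_of_neg h, zero_mul]
      · have hyP : Pth ≤ y := by
          by_contra hc
          exact hmem ⟨lt_of_le_of_ne h (Ne.symm hy), not_le.mp hc⟩
        have h1 : 1 - Real.exp (-(μ₁⁻¹ * (Pth - y))) ≤ 0 := by
          have hnn : (0:ℝ) ≤ -(μ₁⁻¹ * (Pth - y)) := by nlinarith
          have := Real.one_le_exp hnn
          linarith
        simp only [hF]
        rw [ENNReal.ofReal_eq_zero.mpr h1, mul_zero]
    calc ∫⁻ y in (Ioo (0:ℝ) Pth)ᶜ, F y = ∫⁻ _ in (Ioo (0:ℝ) Pth)ᶜ, 0 :=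
          lintegral_congr_ae hz
      _ = 0 := lintegral_zero
  have hsplit : ∫⁻ y, F y = ∫⁻ y in Ioo (0:ℝ) Pth, F y := by
    rw [← lintegral_add_compl F measurableSet_Ioo (μ := volume), hcompl, add_zero]
  rw [hsplit]
  -- identify with ofReal G on Ioo
  have hFG : ∫⁻ y in Ioo (0:ℝ) Pth, F y = ∫⁻ y in Ioo (0:ℝ) Pth, ENNReal.ofReal (G y) := by
    refine setLIntegral_congr_fun measurableSet_Ioo (fun y hy => ?_)
    have hy0 : (0:ℝ) ≤ y := hy.1.le
    have hpow : (μ₂⁻¹) ^ ((L:ℝ)) = μ₂⁻¹ ^ L := Real.rpow_natCast _ L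
    have hpow2 : y ^ ((L:ℝ) - 1) = y ^ n := by
      rw [← Real.rpow_natCast y n, hn, Nat.cast_sub hL, Nat.cast_one]
    simp only [hF, hG]
    rw [gammaPDF_of_nonneg hy0, hpow, hpow2,
      ← ENNReal.ofReal_mul (by positivity)]
  rw [hFG]
  -- to real integral
  have hGc : Continuous G := by fun_prop
  have hInt : IntegrableOn G (Ioo (0:ℝ) Pth) volume :=
    (hGc.integrableOn_Icc).mono_set Ioo_subset_Icc_self
  have hGnn : 0 ≤ᵐ[volume.restrict (Ioo (0:ℝ) Pth)] G := by
    rw [Filter.EventuallyLE, ae_restrict_iff' measurableSet_Ioo]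
    refine ae_of_all _ fun y hy => ?_
    simp only [Pi.zero_apply]
    have h2 : 0 ≤ 1 - Real.exp (-(μ₁⁻¹ * (Pth - y))) := by
      have : -(μ₁⁻¹ * (Pth - y)) < 0 := by nlinarith [hy.2]
      have := Real.exp_lt_one_iff.mpr this  -- name check
      linarith
    have hy0 : (0:ℝ) ≤ y := hy.1.le
    simp only [hG]
    positivity
  rw [← ofReal_integral_eq_lintegral_ofReal hInt hGnn]
  congr 1
  rw [← MeasureTheory.integral_Ioc_eq_integral_Ioo, ← intervalIntegral.integral_of_le hPth.le]
  have hGsplit : ∀ y : ℝ, G y =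
      (μ₂⁻¹ ^ L / Real.Gamma L) * (y ^ n * Real.exp (-(μ₂⁻¹ * y))) -
        (μ₂⁻¹ ^ L / Real.Gamma L * Real.exp (-(μ₁⁻¹ * Pth))) *
          (y ^ n * Real.exp (-(w * y))) := by
    intro y
    have hexp : Real.exp (-(μ₂⁻¹ * y)) * Real.exp (-(μ₁⁻¹ * (Pth - y)))
        = Real.exp (-(μ₁⁻¹ * Pth)) * Real.exp (-(w * y)) := by
      rw [← Real.exp_add, ← Real.exp_add, hwv]; ring_nf
    simp only [hG]
    calc μ₂⁻¹ ^ L / Real.Gamma L * y ^ n * Real.exp (-(μ₂⁻¹ * y)) *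
          (1 - Real.exp (-(μ₁⁻¹ * (Pth - y))))
        = μ₂⁻¹ ^ L / Real.Gamma L * (y ^ n * Real.exp (-(μ₂⁻¹ * y))) -
            μ₂⁻¹ ^ L / Real.Gamma L * y ^ n *
              (Real.exp (-(μ₂⁻¹ * y)) * Real.exp (-(μ₁⁻¹ * (Pth - y)))) := by ring
      _ = _ := by rw [hexp]; ring
  simp_rw [hGsplit]
  have hc1 : Continuous fun y : ℝ => y ^ n * Real.exp (-(μ₂⁻¹ * y)) := by fun_prop
  have hc2 : Continuous fun y : ℝ => y ^ n * Real.exp (-(w * y)) := by fun_prop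
  rw [intervalIntegral.integral_sub
      ((hc1.intervalIntegrable _ _).const_mul _) ((hc2.intervalIntegrable _ _).const_mul _),
    intervalIntegral.integral_const_mul, intervalIntegral.integral_const_mul,
    pow_exp_integral n hr2 Pth, pow_exp_integral n hw0 Pth]
  have hlig : ∀ b : ℝ, (∫ t in (0:ℝ)..b, t ^ n * Real.exp (-t)) = lowerIncGamma L b := by
    intro b; rw [hn]; exact (lowerIncGamma_nat hL b).symm
  rw [hlig, hlig, inv_inv, hnL]
  have harg1 : μ₂⁻¹ * Pth = Pth / μ₂ := inv_mul_eq_div _ _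
  have harg2 : μ₁⁻¹ * Pth = Pth / μ₁ := inv_mul_eq_div _ _
  rw [harg1, harg2]
  have hΓ : Real.Gamma L ≠ 0 := (Real.Gamma_pos_of_pos hLpos).ne'
  have hμ₂ne : μ₂ ≠ 0 := hμ₂.ne'
  have hwne : w ≠ 0 := hw0.ne'
  have ha1 : μ₂ ^ L * μ₂⁻¹ ^ L = 1 := by rw [← mul_pow, mul_inv_cancel₀ hμ₂ne, one_pow]
  have hb1 : w ^ L * w⁻¹ ^ L = 1 := by rw [← mul_pow, mul_inv_cancel₀ hwne, one_pow]
  field_simp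
  linear_combination (-(Real.exp (-(Pth / μ₁)) * lowerIncGamma L (Pth * w)) +
      μ₂ ^ L * lowerIncGamma L (Pth / μ₂) * w ^ L) * ha1 +
    (-(Real.exp (-(Pth / μ₁)) * lowerIncGamma L (Pth * w)) * (μ₂ ^ L * μ₂⁻¹ ^ L)) * hb1
end

section
/- Let L be a positive integer. Let Y be an exponential random variable with mean λ_y > 0 and Z an independent gamma random variable with shape L and scale s > 0. Then for any constants a > 0, ζ > 0 and N_0 > 0, P( a·Y/(Z + N_0) ≥ ζ ) = exp(−ζ·N_0/(a·λ_y)) · s^(−L) · ( 1/s + ζ/(a·λ_y) )^(−L). -/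
open MeasureTheory ProbabilityTheory
open scoped ENNReal NNReal

open Real Set in
lemma expMeasure_Ici_aux {r t : ℝ} (hr : 0 < r) (ht : 0 ≤ t) :
    expMeasure r (Ici t) = ENNReal.ofReal (Real.exp (-(r * t))) := by
  have hP : IsProbabilityMeasure (expMeasure r) := isProbabilityMeasure_expMeasure hr
  have hμdef : expMeasure r = volume.withDensity (exponentialPDF r) := rfl
  have hsingle : expMeasure r {t} = 0 := by
    rw [hμdef, withDensity_apply _ (measurableSet_singleton t)]
    simp
  have hIic : expMeasure r (Iic t) = ENNReal.ofReal (1 - Real.exp (-(r * t))) := by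
    rw [hμdef, withDensity_apply _ measurableSet_Iic,
      lintegral_exponentialPDF_eq_antiDeriv hr, if_pos ht]
  have h1e : 0 ≤ 1 - Real.exp (-(r * t)) := by
    have : Real.exp (-(r * t)) ≤ 1 := Real.exp_le_one_iff.mpr (by nlinarith)
    linarith
  have hIoi : expMeasure r (Ioi t) = ENNReal.ofReal (Real.exp (-(r * t))) := by
    have hc := measure_compl (μ := expMeasure r) (s := Iic t) measurableSet_Iic (measure_ne_top _ _)
    rw [compl_Iic, hIic, measure_univ] at hc
    rw [hc, show (1 : ℝ≥0∞) = ENNReal.ofReal 1 from ENNReal.ofReal_one.symm,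
      ← ENNReal.ofReal_sub 1 h1e, sub_sub_cancel]
  refine le_antisymm ?_ (by rw [← hIoi]; exact measure_mono Ioi_subset_Ici_self)
  rw [← hIoi]
  calc expMeasure r (Ici t) ≤ expMeasure r ({t} ∪ Ioi t) := by
        refine measure_mono fun x hx => ?_
        rcases eq_or_lt_of_le (mem_Ici.mp hx) with h | h
        · exact Or.inl (by simp [h.symm])
        · exact Or.inr h
    _ ≤ expMeasure r {t} + expMeasure r (Ioi t) := measure_union_le _ _
    _ = expMeasure r (Ioi t) := by rw [hsingle, zero_add]

theorem sinr_exceedance_prob_gamma_interference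
    {Ω : Type*} [MeasureSpace Ω] [IsProbabilityMeasure (ℙ : Measure Ω)]
    (L : ℕ) (hL : 0 < L)
    (Y Z : Ω → ℝ) (hYm : Measurable Y) (hZm : Measurable Z)
    (ly s : ℝ) (hly : 0 < ly) (hs : 0 < s)
    (hY : Measure.map Y ℙ = expMeasure ly⁻¹)
    (hZ : Measure.map Z ℙ = gammaMeasure L s⁻¹)
    (hind : IndepFun Y Z ℙ)
    (a ζ N0 : ℝ) (ha : 0 < a) (hζ : 0 < ζ) (hN0 : 0 < N0) :
    ℙ {ω | a * Y ω / (Z ω + N0) ≥ ζ} =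
      ENNReal.ofReal
        (Real.exp (-(ζ * N0 / (a * ly))) * (s ^ L)⁻¹ *
          ((1 / s + ζ / (a * ly)) ^ L)⁻¹) := by
  have hr : (0:ℝ) < ly⁻¹ := inv_pos.mpr hly
  have hr' : (0:ℝ) < s⁻¹ := inv_pos.mpr hs
  have hL' : (0:ℝ) < (L:ℝ) := by exact_mod_cast hL
  set c : ℝ := ζ / (a * ly) with hc
  have hcpos : 0 < c := by positivity
  haveI : IsProbabilityMeasure (expMeasure ly⁻¹) := isProbabilityMeasure_expMeasure hr
  haveI : IsProbabilityMeasure (gammaMeasure L s⁻¹) := isProbabilityMeasure_gammaMeasure hL' hr'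
  set S : Set (ℝ × ℝ) := {p : ℝ × ℝ | ζ ≤ a * p.2 / (p.1 + N0)} with hSdef
  have hSm : MeasurableSet S := measurableSet_le measurable_const
    ((measurable_snd.const_mul a).div (measurable_fst.add_const N0))
  have hmap : Measure.map (fun ω => (Z ω, Y ω)) ℙ = (gammaMeasure L s⁻¹).prod (expMeasure ly⁻¹) := by
    rw [← hZ, ← hY]
    exact (indepFun_iff_map_prod_eq_prod_map_map hZm.aemeasurable hYm.aemeasurable).mp hind.symm
  have hev : {ω | a * Y ω / (Z ω + N0) ≥ ζ} = (fun ω => (Z ω, Y ω)) ⁻¹' S := rfl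
  rw [hev, ← Measure.map_apply (hZm.prodMk hYm) hSm, hmap, Measure.prod_apply hSm]
  have hgm : Measurable fun z => expMeasure ly⁻¹ (Prod.mk z ⁻¹' S) :=
    measurable_measure_prodMk_left hSm
  rw [show gammaMeasure (L:ℝ) s⁻¹ = volume.withDensity (gammaPDF L s⁻¹) from rfl,
    lintegral_withDensity_eq_lintegral_mul _
      (show Measurable (gammaPDF (L:ℝ) s⁻¹) from (measurable_gammaPDFReal _ _).ennreal_ofReal) hgm]
  have hpt : ∀ z : ℝ, (gammaPDF L s⁻¹ * fun z => expMeasure ly⁻¹ (Prod.mk z ⁻¹' S)) z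
      = ENNReal.ofReal (gammaPDFReal L s⁻¹ z * Real.exp (-(c * (z + N0)))) := by
    intro z
    rcases lt_or_ge z 0 with hz | hz
    · simp [gammaPDF_of_neg hz, gammaPDFReal, not_le.mpr hz]
    · have hzN : 0 < z + N0 := by linarith
      have hsec : Prod.mk z ⁻¹' S = Set.Ici (ζ * (z + N0) / a) := by
        ext y
        simp only [hSdef, Set.mem_preimage, Set.mem_setOf_eq, Set.mem_Ici]
        rw [le_div_iff₀ hzN, div_le_iff₀ ha]
        constructor <;> intro h <;> nlinarith
      have htnn : 0 ≤ ζ * (z + N0) / a := by positivity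
      have hexp : ly⁻¹ * (ζ * (z + N0) / a) = c * (z + N0) := by
        rw [hc]; field_simp
      simp only [Pi.mul_apply, hsec, expMeasure_Ici_aux hr htnn, hexp,
        gammaPDF_of_nonneg hz,
        ← ENNReal.ofReal_mul (gammaPDFReal_nonneg hL' hr' z |>.trans_eq
          (by rw [gammaPDFReal, if_pos hz]))]
      rw [gammaPDFReal, if_pos hz]
  rw [lintegral_congr hpt]
  -- split off the negative half line
  rw [← lintegral_add_compl (μ := volume)
      (fun z => ENNReal.ofReal (gammaPDFReal L s⁻¹ z * Real.exp (-(c * (z + N0)))))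
      (measurableSet_Ici (a := (0:ℝ)))]
  have hneg : ∫⁻ z in (Set.Ici (0:ℝ))ᶜ,
      ENNReal.ofReal (gammaPDFReal L s⁻¹ z * Real.exp (-(c * (z + N0)))) = 0 := by
    rw [Set.compl_Ici]
    rw [setLIntegral_congr_fun (g := fun _ => (0:ℝ≥0∞)) measurableSet_Iio
      (fun z (hz : z < 0) => by
        simp [gammaPDFReal, not_le.mpr hz])]
    simp
  rw [hneg, add_zero]
  -- finiteness
  have hfin : ∫⁻ z in Set.Ici (0:ℝ),
      ENNReal.ofReal (gammaPDFReal L s⁻¹ z * Real.exp (-(c * (z + N0)))) ≠ ⊤ := by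
    have hb : ∀ z : ℝ, ENNReal.ofReal (gammaPDFReal L s⁻¹ z * Real.exp (-(c * (z + N0))))
        ≤ gammaPDF L s⁻¹ z := by
      intro z
      rcases lt_or_ge z 0 with hz | hz
      · simp [gammaPDFReal, not_le.mpr hz]
      · rw [gammaPDF_of_nonneg hz]
        refine ENNReal.ofReal_le_ofReal ?_
        have h1 : Real.exp (-(c * (z + N0))) ≤ 1 := Real.exp_le_one_iff.mpr (by nlinarith)
        have h0 : 0 ≤ gammaPDFReal L s⁻¹ z := gammaPDFReal_nonneg hL' hr' z
        calc gammaPDFReal L s⁻¹ z * Real.exp (-(c * (z + N0)))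
            ≤ gammaPDFReal L s⁻¹ z * 1 := by
              exact mul_le_mul_of_nonneg_left h1 h0
          _ = _ := by rw [mul_one, gammaPDFReal, if_pos hz]
    refine ne_top_of_le_ne_top (by simp : (1:ℝ≥0∞) ≠ ⊤) ?_
    calc ∫⁻ z in Set.Ici (0:ℝ), ENNReal.ofReal (gammaPDFReal L s⁻¹ z * Real.exp (-(c * (z + N0))))
        ≤ ∫⁻ z in Set.Ici (0:ℝ), gammaPDF L s⁻¹ z := lintegral_mono hb
      _ ≤ ∫⁻ z, gammaPDF L s⁻¹ z := setLIntegral_le_lintegral _ _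
      _ = 1 := lintegral_gammaPDF_eq_one hL' hr'
  -- convert to a Bochner integral
  have hnn : 0 ≤ᵐ[volume.restrict (Set.Ici (0:ℝ))]
      fun z => gammaPDFReal L s⁻¹ z * Real.exp (-(c * (z + N0))) :=
    ae_of_all _ fun z => mul_nonneg (gammaPDFReal_nonneg hL' hr' z) (Real.exp_pos _).le
  have hm : AEStronglyMeasurable
      (fun z => gammaPDFReal L s⁻¹ z * Real.exp (-(c * (z + N0))))
      (volume.restrict (Set.Ici (0:ℝ))) :=
    ((measurable_gammaPDFReal _ _).mul
      (((measurable_id.add_const N0).const_mul c).neg.exp)).aestronglyMeasurable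
  have hIE := integral_eq_lintegral_of_nonneg_ae hnn hm
  have hlin : ∫⁻ z in Set.Ici (0:ℝ),
      ENNReal.ofReal (gammaPDFReal L s⁻¹ z * Real.exp (-(c * (z + N0))))
      = ENNReal.ofReal (∫ z in Set.Ici (0:ℝ),
          gammaPDFReal L s⁻¹ z * Real.exp (-(c * (z + N0)))) := by
    rw [hIE, ENNReal.ofReal_toReal hfin]
  rw [hlin]
  congr 1
  -- compute the real integral
  have hgform : ∀ z ∈ Set.Ici (0:ℝ),
      gammaPDFReal L s⁻¹ z * Real.exp (-(c * (z + N0)))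
      = (s⁻¹ ^ (L:ℝ) / Real.Gamma L * Real.exp (-(c * N0))) *
          (z ^ ((L:ℝ) - 1) * Real.exp (-((s⁻¹ + c) * z))) := by
    intro z hz
    rw [gammaPDFReal, if_pos (Set.mem_Ici.mp hz)]
    have : Real.exp (-(s⁻¹ * z)) * Real.exp (-(c * (z + N0)))
        = Real.exp (-(c * N0)) * Real.exp (-((s⁻¹ + c) * z)) := by
      rw [← Real.exp_add, ← Real.exp_add]
      exact congrArg Real.exp (by ring)
    calc s⁻¹ ^ (L:ℝ) / Real.Gamma L * z ^ ((L:ℝ) - 1) * Real.exp (-(s⁻¹ * z)) *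
          Real.exp (-(c * (z + N0)))
        = s⁻¹ ^ (L:ℝ) / Real.Gamma L * z ^ ((L:ℝ) - 1) *
            (Real.exp (-(s⁻¹ * z)) * Real.exp (-(c * (z + N0)))) := by ring
      _ = _ := by rw [this]; ring
  rw [setIntegral_congr_fun measurableSet_Ici hgform, integral_Ici_eq_integral_Ioi,
    integral_const_mul, Real.integral_rpow_mul_exp_neg_mul_Ioi hL' (by positivity)]
  -- final algebra
  have hΓ : Real.Gamma (L:ℝ) ≠ 0 := (Real.Gamma_pos_of_pos hL').ne'
  have hcN : c * N0 = ζ * N0 / (a * ly) := by rw [hc]; ring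
  have hb0 : s⁻¹ + c ≠ 0 := by positivity
  have hs0 : s ≠ 0 := hs.ne'
  rw [hcN, Real.rpow_natCast, Real.rpow_natCast,
    show (1:ℝ) / s + c = s⁻¹ + c from by rw [one_div], div_pow, one_pow]
  field_simp
  rw [← mul_pow, one_div, inv_mul_cancel₀ hs0, one_pow]
end

section
/- Let L be a positive integer. Let X be an exponential random variable with mean λ_x > 0 and U an independent gamma random variable with shape L and scale s > 0. Let ζ > 0, N_0 > 0 and δ₁ ≥ 0, and set φ = 1/s + ζ/λ_x. Then P( X ≥ ζ·(U + N_0) and U ≥ δ₁ ) = exp(−ζ·N_0/λ_x) · Γ(L, φ·δ₁) / ( Γ(L) · s^L · φ^L ). -/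
open MeasureTheory ProbabilityTheory

/-- Upper incomplete gamma function `Γ(a, b) = ∫_b^∞ t^(a-1) e^(-t) dt`. -/
noncomputable def upperIncGamma (a b : ℝ) : ℝ :=
  ∫ t in Set.Ioi b, t ^ (a - 1) * Real.exp (-t)

open Set Real

lemma expMeasure_Ici_eq {r a : ℝ} (hr : 0 < r) (ha : 0 ≤ a) :
    expMeasure r (Set.Ici a) = ENNReal.ofReal (Real.exp (-(r * a))) := by
  rw [expMeasure, gammaMeasure, withDensity_apply _ measurableSet_Ici]
  have h1 : ∀ x ∈ Set.Ici a, gammaPDF 1 r x = ENNReal.ofReal (r * Real.exp (-(r * x))) := by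
    intro x hx
    rw [gammaPDF_of_nonneg (ha.trans hx)]
    norm_num [Real.Gamma_one, Real.rpow_one]
  rw [setLIntegral_congr_fun_ae measurableSet_Ici (ae_of_all _ h1)]
  have hint : IntegrableOn (fun x => r * Real.exp (-(r * x))) (Set.Ici a) := by
    rw [integrableOn_Ici_iff_integrableOn_Ioi]
    have h := (exp_neg_integrableOn_Ioi a hr).const_mul r
    simpa [neg_mul, IntegrableOn] using h
  rw [← ofReal_integral_eq_lintegral_ofReal hint (ae_of_all _ fun x => by positivity)]
  congr 1
  rw [MeasureTheory.integral_Ici_eq_integral_Ioi, integral_const_mul]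
  have key := integral_comp_mul_left_Ioi (fun x => Real.exp (-x)) a hr
  simp only [smul_eq_mul] at key
  rw [key, integral_exp_neg_Ioi]
  field_simp

lemma gamma_tail_integral {n : ℕ} (hn : 0 < n) {φ δ : ℝ} (hφ : 0 < φ) (hδ : 0 ≤ δ) :
    ∫ u in Set.Ioi δ, u ^ ((n : ℝ) - 1) * Real.exp (-(φ * u)) =
      upperIncGamma n (φ * δ) / φ ^ n := by
  have key := integral_comp_mul_left_Ioi (fun t => t ^ ((n : ℝ) - 1) * Real.exp (-t)) δ hφ
  simp only [smul_eq_mul] at key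
  have congr1 : ∫ x in Set.Ioi δ, (φ * x) ^ ((n : ℝ) - 1) * Real.exp (-(φ * x)) =
      ∫ x in Set.Ioi δ, φ ^ ((n : ℝ) - 1) * (x ^ ((n : ℝ) - 1) * Real.exp (-(φ * x))) := by
    refine setIntegral_congr_fun measurableSet_Ioi fun x hx => ?_
    rw [Real.mul_rpow hφ.le (hδ.trans (le_of_lt hx))]
    ring
  rw [congr1, integral_const_mul] at key
  have hpow : φ ^ ((n : ℝ) - 1) * φ = φ ^ n := by
    have h := Real.rpow_add hφ ((n : ℝ) - 1) 1
    rw [Real.rpow_one] at h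
    rw [← h, sub_add_cancel, Real.rpow_natCast]
  have key2 : φ ^ n * (∫ x in Set.Ioi δ, x ^ ((n : ℝ) - 1) * Real.exp (-(φ * x))) =
      upperIncGamma n (φ * δ) := by
    rw [← hpow, upperIncGamma]
    calc φ ^ ((n : ℝ) - 1) * φ * (∫ x in Set.Ioi δ, x ^ ((n : ℝ) - 1) * Real.exp (-(φ * x)))
        = φ * (φ ^ ((n : ℝ) - 1) * ∫ x in Set.Ioi δ, x ^ ((n : ℝ) - 1) * Real.exp (-(φ * x))) := by
          ring
      _ = φ * (φ⁻¹ * ∫ t in Set.Ioi (φ * δ), t ^ ((n : ℝ) - 1) * Real.exp (-t)) := by rw [key]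
      _ = ∫ t in Set.Ioi (φ * δ), t ^ ((n : ℝ) - 1) * Real.exp (-t) := by
          field_simp
  rw [eq_div_iff (pow_ne_zero _ hφ.ne'), mul_comm]
  exact key2

set_option maxHeartbeats 1000000 in
theorem joint_prob_I3
    {Ω : Type*} [MeasureSpace Ω] [IsProbabilityMeasure (ℙ : Measure Ω)]
    (L : ℕ) (hL : 0 < L)
    (X U : Ω → ℝ) (hXm : Measurable X) (hUm : Measurable U)
    (lx s : ℝ) (hlx : 0 < lx) (hs : 0 < s)
    (hX : Measure.map X ℙ = expMeasure lx⁻¹)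
    (hU : Measure.map U ℙ = gammaMeasure L s⁻¹)
    (hind : IndepFun X U ℙ)
    (ζ N0 δ₁ : ℝ) (hζ : 0 < ζ) (hN0 : 0 < N0) (hδ₁ : 0 ≤ δ₁)
    (φ : ℝ) (hφ : φ = 1 / s + ζ / lx) :
    ℙ {ω | X ω ≥ ζ * (U ω + N0) ∧ U ω ≥ δ₁} =
      ENNReal.ofReal
        (Real.exp (-(ζ * N0 / lx)) * upperIncGamma L (φ * δ₁) /
          (Real.Gamma L * s ^ L * φ ^ L)) := by
  have hrx : (0 : ℝ) < lx⁻¹ := inv_pos.mpr hlx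
  have hrs : (0 : ℝ) < s⁻¹ := inv_pos.mpr hs
  have hLR : (0 : ℝ) < (L : ℝ) := by exact_mod_cast hL
  have hφpos : 0 < φ := by rw [hφ]; positivity
  have instE : IsProbabilityMeasure (expMeasure lx⁻¹) := isProbabilityMeasure_expMeasure hrx
  have instG : IsProbabilityMeasure (gammaMeasure (L : ℝ) s⁻¹) :=
    isProbabilityMeasure_gammaMeasure hLR hrs
  set C : ℝ := Real.exp (-(ζ * N0 / lx)) * ((s⁻¹) ^ ((L : ℝ)) / Real.Gamma L) with hC
  have hCnn : 0 ≤ C := by rw [hC]; positivity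
  set S : Set (ℝ × ℝ) := {p : ℝ × ℝ | ζ * (p.2 + N0) ≤ p.1 ∧ δ₁ ≤ p.2} with hSdef
  have hSm : MeasurableSet S := by
    have : S = {p : ℝ × ℝ | ζ * (p.2 + N0) ≤ p.1} ∩ {p : ℝ × ℝ | δ₁ ≤ p.2} := rfl
    rw [this]
    exact (measurableSet_le (by fun_prop) (by fun_prop)).inter
      (measurableSet_le measurable_const measurable_snd)
  have hset : {ω | X ω ≥ ζ * (U ω + N0) ∧ U ω ≥ δ₁} = (fun ω => (X ω, U ω)) ⁻¹' S := rfl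
  rw [hset, ← Measure.map_apply (hXm.prodMk hUm) hSm,
    (indepFun_iff_map_prod_eq_prod_map_map hXm.aemeasurable hUm.aemeasurable).1 hind, hX, hU,
    Measure.prod_apply_symm hSm]
  have hsec : ∀ y : ℝ, (expMeasure lx⁻¹) ((fun x => (x, y)) ⁻¹' S) =
      Set.indicator (Set.Ici δ₁)
        (fun y => ENNReal.ofReal (Real.exp (-(lx⁻¹ * (ζ * (y + N0)))))) y := by
    intro y
    by_cases hy : δ₁ ≤ y
    · have hpre : (fun x => (x, y)) ⁻¹' S = Set.Ici (ζ * (y + N0)) := by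
        ext x
        simp [hSdef, hy, Set.mem_Ici]
      have h0 : 0 ≤ ζ * (y + N0) := by
        have : 0 ≤ y := le_trans hδ₁ hy
        positivity
      rw [hpre, expMeasure_Ici_eq hrx h0]
      exact (Set.indicator_of_mem (Set.mem_Ici.mpr hy)
        (fun y => ENNReal.ofReal (Real.exp (-(lx⁻¹ * (ζ * (y + N0))))))).symm
    · have hpre : (fun x => (x, y)) ⁻¹' S = ∅ := by
        ext x
        simp [hSdef, hy]
      rw [hpre, Set.indicator_of_notMem (by simpa [Set.mem_Ici] using hy)]
      simp
  rw [lintegral_congr hsec, lintegral_indicator measurableSet_Ici _, gammaMeasure,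
    restrict_withDensity measurableSet_Ici,
    lintegral_withDensity_eq_lintegral_mul _ (show Measurable (gammaPDF (L : ℝ) s⁻¹) from (measurable_gammaPDFReal _ _).ennreal_ofReal) (by fun_prop)]
  have hcongr : ∀ y ∈ Set.Ici δ₁,
      gammaPDF L s⁻¹ y * ENNReal.ofReal (Real.exp (-(lx⁻¹ * (ζ * (y + N0))))) =
      ENNReal.ofReal (C * (y ^ ((L : ℝ) - 1) * Real.exp (-(φ * y)))) := by
    intro y hy
    have hy0 : (0 : ℝ) ≤ y := le_trans hδ₁ hy
    rw [gammaPDF_of_nonneg hy0, ← ENNReal.ofReal_mul (by positivity)]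
    congr 1
    have hE : -(s⁻¹ * y) + -(lx⁻¹ * (ζ * (y + N0))) = -(ζ * N0 / lx) + -(φ * y) := by
      rw [hφ]
      field_simp
      ring
    rw [hC, mul_assoc, mul_assoc, ← Real.exp_add, hE, Real.exp_add]
    ring
  simp only [Pi.mul_apply]
  rw [setLIntegral_congr_fun_ae measurableSet_Ici (ae_of_all _ hcongr)]
  have hint : IntegrableOn (fun y => y ^ ((L : ℝ) - 1) * Real.exp (-(φ * y))) (Set.Ioi δ₁) := by
    have h0 : IntegrableOn (fun t => Real.exp (-t) * t ^ ((L : ℝ) - 1)) (Set.Ioi (φ * δ₁)) :=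
      (Real.GammaIntegral_convergent hLR).mono_set (Set.Ioi_subset_Ioi (by positivity))
    have h1 : IntegrableOn (fun x => Real.exp (-(φ * x)) * (φ * x) ^ ((L : ℝ) - 1))
        (Set.Ioi δ₁) := (integrableOn_Ioi_comp_mul_left_iff
        (fun t => Real.exp (-t) * t ^ ((L : ℝ) - 1)) δ₁ hφpos).2 h0
    have h2 : IntegrableOn (fun x => (φ ^ ((L : ℝ) - 1))⁻¹ *
        (Real.exp (-(φ * x)) * (φ * x) ^ ((L : ℝ) - 1))) (Set.Ioi δ₁) :=
      h1.const_mul _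
    refine h2.congr_fun (fun x hx => ?_) measurableSet_Ioi
    have hx0 : (0 : ℝ) ≤ x := le_trans hδ₁ (le_of_lt hx)
    beta_reduce
    rw [Real.mul_rpow hφpos.le hx0]
    have : φ ^ ((L : ℝ) - 1) ≠ 0 := (Real.rpow_pos_of_pos hφpos _).ne'
    field_simp
  have hintC : IntegrableOn (fun y => C * (y ^ ((L : ℝ) - 1) * Real.exp (-(φ * y))))
      (Set.Ici δ₁) := by
    rw [integrableOn_Ici_iff_integrableOn_Ioi]
    exact hint.const_mul C
  rw [← ofReal_integral_eq_lintegral_ofReal hintC ?_]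
  · rw [MeasureTheory.integral_Ici_eq_integral_Ioi, integral_const_mul,
      gamma_tail_integral hL hφpos hδ₁]
    congr 1
    rw [hC, Real.rpow_natCast, inv_pow]
    have hG : Real.Gamma (L : ℝ) ≠ 0 := (Real.Gamma_pos_of_pos hLR).ne'
    field_simp
  · filter_upwards [ae_restrict_mem measurableSet_Ici] with y hy
    have hy0 : (0 : ℝ) ≤ y := le_trans hδ₁ hy
    have : (0 : ℝ) ≤ y ^ ((L : ℝ) - 1) * Real.exp (-(φ * y)) := by positivity
    exact mul_nonneg hCnn this
end

section
/- Let X and Y be independent exponential random variables with means λ_sr > 0 and λ_rd > 0 respectively, and let P_Sm, P_Rm, θ, ζ, N_0 > 0 satisfy P_Rm/(θ·P_Sm) ≥ N_0·ζ/P_Sm. Then P( P_Sm·X/N_0 ≥ ζ and min(θ·P_Sm·X, P_Rm)·Y/N_0 ≥ ζ ) = (1/λ_sr) · ∫_{N_0·ζ/P_Sm}^{P_Rm/(θ·P_Sm)} exp( −x/λ_sr − N_0·ζ/(θ·P_Sm·λ_rd·x) ) dx + exp( −P_Rm/(θ·P_Sm·λ_sr) − N_0·ζ/(P_Rm·λ_rd)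 ). -/
open MeasureTheory ProbabilityTheory
open Real Set

lemma expMeasure_Ici{r : ℝ} (hr : 0 < r) {c : ℝ} (hc : 0 ≤ c) :
    expMeasure r (Ici c) = ENNReal.ofReal (Real.exp (-(r*c))) := by
  have habs : expMeasure r ≪ volume := withDensity_absolutelyContinuous _ _
  have hsing : expMeasure r {c} = 0 := habs (volume_singleton)
  have hIic : expMeasure r (Iic c) = ENNReal.ofReal (1 - Real.exp (-(r*c))) := by
    rw [expMeasure, gammaMeasure, withDensity_apply _ measurableSet_Iic]
    exact lintegral_exponentialPDF_eq_antiDeriv hr c ▸ by rw [if_pos hc]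
  have : IsProbabilityMeasure (expMeasure r) := isProbabilityMeasure_expMeasure hr
  have hIoi : expMeasure r (Ioi c) = ENNReal.ofReal (Real.exp (-(r*c))) := by
    have := measure_compl (μ := expMeasure r) (measurableSet_Iic (a := c)) (measure_ne_top _ _)
    rw [compl_Iic] at this
    rw [this, measure_univ, hIic]
    refine ENNReal.sub_eq_of_eq_add (by simp) ?_
    rw [← ENNReal.ofReal_add (by positivity)
      (by nlinarith [exp_le_one_iff.2 (by nlinarith : -(r*c) ≤ 0)])]
    norm_num
  have hset : Ici c = {c} ∪ Ioi c := by
    ext x; simp [le_iff_lt_or_eq, eq_comm, or_comm]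
  have heq : expMeasure r (Ici c) = expMeasure r (Ioi c) := by
    refine le_antisymm ?_ (measure_mono Ioi_subset_Ici_self)
    rw [hset]
    exact (measure_union_le _ _).trans (by rw [hsing, zero_add])
  rw [heq]; exact hIoi


theorem noise_dominant_case_I
    {Ω : Type*} [MeasureSpace Ω] [IsProbabilityMeasure (ℙ : Measure Ω)]
    (X Y : Ω → ℝ) (hXm : Measurable X) (hYm : Measurable Y)
    (lsr lrd : ℝ) (hlsr : 0 < lsr) (hlrd : 0 < lrd)
    (hX : Measure.map X ℙ = expMeasure lsr⁻¹)
    (hY : Measure.map Y ℙ = expMeasure lrd⁻¹)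
    (hind : IndepFun X Y ℙ)
    (PSm PRm θ ζ N0 : ℝ)
    (hPSm : 0 < PSm) (hPRm : 0 < PRm) (hθ : 0 < θ) (hζ : 0 < ζ) (hN0 : 0 < N0)
    (hcase : N0 * ζ / PSm ≤ PRm / (θ * PSm)) :
    (ℙ {ω | PSm * X ω / N0 ≥ ζ ∧ min (θ * PSm * X ω) PRm * Y ω / N0 ≥ ζ}).toReal =
      (1 / lsr) * (∫ x in (N0 * ζ / PSm)..(PRm / (θ * PSm)),
          Real.exp (-(x / lsr) - N0 * ζ / (θ * PSm * lrd * x))) +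
        Real.exp (-(PRm / (θ * PSm * lsr)) - N0 * ζ / (PRm * lrd)) := by
  
  set a : ℝ := N0 * ζ / PSm with ha_def
  set b : ℝ := PRm / (θ * PSm) with hb_def
  have ha : 0 < a := by positivity
  have hb : 0 < b := by positivity
  have hab : a ≤ b := hcase
  set g : ℝ → ℝ := fun x => N0 * ζ / min (θ * PSm * x) PRm with hg_def
  set r : ℝ := lsr⁻¹ with hr_def
  set s : ℝ := lrd⁻¹ with hs_def
  have hr : 0 < r := by positivity
  have hs : 0 < s := by positivity
  set T : Set (ℝ × ℝ) := {p | a ≤ p.1 ∧ g p.1 ≤ p.2} with hT_def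
  have hgm : Measurable g :=
    measurable_const.div ((measurable_id.const_mul _).min measurable_const)
  have hT : MeasurableSet T :=
    (measurableSet_le measurable_const measurable_fst).inter
      (measurableSet_le (hgm.comp measurable_fst) measurable_snd)
  -- step 1 : set equality
  have key1 : ∀ x : ℝ, ζ ≤ PSm * x / N0 ↔ a ≤ x := by
    intro x
    rw [le_div_iff₀ hN0, ha_def, div_le_iff₀ hPSm]
    constructor <;> intro h <;> nlinarith
  have key2 : ∀ x y : ℝ, a ≤ x → (ζ ≤ min (θ * PSm * x) PRm * y / N0 ↔ g x ≤ y) := by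
    intro x y hx
    have hx0 : 0 < x := lt_of_lt_of_le ha hx
    have hm : 0 < min (θ * PSm * x) PRm := lt_min (by positivity) hPRm
    rw [le_div_iff₀ hN0, hg_def, div_le_iff₀ hm]
    constructor <;> intro h <;> nlinarith
  have hsetEq : {ω | PSm * X ω / N0 ≥ ζ ∧ min (θ * PSm * X ω) PRm * Y ω / N0 ≥ ζ}
      = (fun ω => (X ω, Y ω)) ⁻¹' T := by
    ext ω
    simp only [mem_setOf_eq, mem_preimage, hT_def, ge_iff_le]
    constructor
    · rintro ⟨h1, h2⟩
      have hx := (key1 _).mp h1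
      exact ⟨hx, (key2 _ _ hx).mp h2⟩
    · rintro ⟨hx, hy⟩
      exact ⟨(key1 _).mpr hx, (key2 _ _ hx).mpr hy⟩
  -- step 2 : probability as product measure
  have hmap : Measure.map (fun ω => (X ω, Y ω)) ℙ
      = (expMeasure r).prod (expMeasure s) := by
    rw [← hX, ← hY]
    exact (indepFun_iff_map_prod_eq_prod_map_map hXm.aemeasurable hYm.aemeasurable).mp hind
  have hP : ℙ {ω | PSm * X ω / N0 ≥ ζ ∧ min (θ * PSm * X ω) PRm * Y ω / N0 ≥ ζ}
      = (expMeasure r).prod (expMeasure s) T := by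
    rw [hsetEq, ← Measure.map_apply (hXm.prodMk hYm) hT, hmap]
  -- step 3 : Fubini slice
  have hprob_s : IsProbabilityMeasure (expMeasure s) := isProbabilityMeasure_expMeasure hs
  have hslice : (expMeasure r).prod (expMeasure s) T
      = ∫⁻ x in Ici a, expMeasure s (Ici (g x)) ∂(expMeasure r) := by
    rw [Measure.prod_apply hT]
    have : ∀ x : ℝ, expMeasure s (Prod.mk x ⁻¹' T)
        = (Ici a).indicator (fun x => expMeasure s (Ici (g x))) x := by
      intro x
      by_cases hx : a ≤ x
      · simp only [Set.indicator_apply, mem_Ici, if_pos hx]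
        congr 1
        ext y
        simp [hT_def, hx]
      · simp only [Set.indicator_apply, mem_Ici, if_neg hx]
        have : Prod.mk x ⁻¹' T = ∅ := by
          ext y; simp [hT_def, hx]
        simp [this]
    rw [lintegral_congr this, lintegral_indicator measurableSet_Ici]
  -- step 4 : inner measure
  have hinner : ∀ x ∈ Ici a, expMeasure s (Ici (g x)) = ENNReal.ofReal (Real.exp (-(s * g x))) := by
    intro x hx
    have hx0 : (0:ℝ) < x := lt_of_lt_of_le ha hx
    have hm : 0 < min (θ * PSm * x) PRm := lt_min (by positivity) hPRm
    exact expMeasure_Ici hs (le_of_lt (div_pos (by positivity) hm))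
  have hmain : ∫⁻ x in Ici a, expMeasure s (Ici (g x)) ∂(expMeasure r)
      = ∫⁻ x in Ici a,
          ENNReal.ofReal (r * Real.exp (-(r*x)) * Real.exp (-(s * g x))) ∂volume := by
    rw [setLIntegral_congr_fun measurableSet_Ici hinner]
    have hmeas : Measurable fun x => ENNReal.ofReal (Real.exp (-(s * g x))) :=
      ENNReal.measurable_ofReal.comp (Real.measurable_exp.comp ((hgm.const_mul s).neg))
    rw [expMeasure, gammaMeasure, restrict_withDensity measurableSet_Ici,
      lintegral_withDensity_eq_lintegral_mul _ (show Measurable (gammaPDF 1 r) from (measurable_gammaPDFReal 1 r).ennreal_ofReal) hmeas]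
    refine setLIntegral_congr_fun measurableSet_Ici fun x hx => ?_
    have hx0 : (0:ℝ) ≤ x := le_of_lt (lt_of_lt_of_le ha hx)
    simp only [Pi.mul_apply]
    show gammaPDF 1 r x * _ = _
    rw [show gammaPDF 1 r x = ENNReal.ofReal (r * Real.exp (-(r*x))) from
      exponentialPDF_of_nonneg hx0, ← ENNReal.ofReal_mul (by positivity)]
  -- step 5 : split
  have hdisj : Disjoint (Ico a b) (Ici b) :=
    Set.disjoint_left.mpr (fun x hx hx' => absurd hx.2 (not_lt.mpr hx'))
  have hsplit : ∫⁻ x in Ici a,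
        ENNReal.ofReal (r * Real.exp (-(r*x)) * Real.exp (-(s * g x))) ∂volume
      = (∫⁻ x in Ico a b,
          ENNReal.ofReal (r * Real.exp (-(r*x)) * Real.exp (-(s * g x))) ∂volume)
        + ∫⁻ x in Ici b,
          ENNReal.ofReal (r * Real.exp (-(r*x)) * Real.exp (-(s * g x))) ∂volume := by
    rw [← Ico_union_Ici_eq_Ici hab, lintegral_union measurableSet_Ici hdisj]
  -- step 6 : second term
  have hIcib : ∫⁻ x in Ici b, ENNReal.ofReal (r * Real.exp (-(r*x))) ∂volume
      = ENNReal.ofReal (Real.exp (-(r*b))) := by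
    rw [← expMeasure_Ici hr hb.le, expMeasure, gammaMeasure,
      withDensity_apply _ measurableSet_Ici]
    refine (setLIntegral_congr_fun measurableSet_Ici fun x hx => ?_).symm
    exact (exponentialPDF_of_nonneg (le_trans hb.le hx) : gammaPDF 1 r x = _)
  have hterm2 : ∫⁻ x in Ici b,
        ENNReal.ofReal (r * Real.exp (-(r*x)) * Real.exp (-(s * g x))) ∂volume
      = ENNReal.ofReal (Real.exp (-(PRm / (θ * PSm * lsr)) - N0 * ζ / (PRm * lrd))) := by
    have hgb : ∀ x ∈ Ici b, g x = N0 * ζ / PRm := by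
      intro x hx
      have hx' : PRm ≤ θ * PSm * x := by
        rw [mem_Ici, hb_def, div_le_iff₀ (by positivity : (0:ℝ) < θ * PSm)] at hx
        nlinarith
      simp only [hg_def, min_eq_right hx']
    have : ∀ x ∈ Ici b,
        ENNReal.ofReal (r * Real.exp (-(r*x)) * Real.exp (-(s * g x)))
          = ENNReal.ofReal (Real.exp (-(s * (N0 * ζ / PRm))))
            * ENNReal.ofReal (r * Real.exp (-(r*x))) := by
      intro x hx
      rw [hgb x hx, ← ENNReal.ofReal_mul (by positivity)]
      ring_nf
    rw [setLIntegral_congr_fun measurableSet_Ici this,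
      lintegral_const_mul _ (by
        exact ENNReal.measurable_ofReal.comp
          ((Real.measurable_exp.comp ((measurable_id.const_mul r).neg)).const_mul r)),
      hIcib, ← ENNReal.ofReal_mul (by positivity), ← Real.exp_add]
    congr 1
    rw [hb_def, hr_def, hs_def]
    field_simp
    ring
  -- step 7 : first term
  set F : ℝ → ℝ := fun x => Real.exp (-(x / lsr) - N0 * ζ / (θ * PSm * lrd * x)) with hF_def
  have hFcont : ContinuousOn F (Icc a b) := by
    apply Real.continuous_exp.comp_continuousOn
    apply ContinuousOn.sub
    · exact (continuousOn_id.div_const lsr).neg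
    · exact continuousOn_const.div (continuousOn_const.mul continuousOn_id)
        (fun x hx => by
          have : (0:ℝ) < x := lt_of_lt_of_le ha hx.1
          positivity)
  have hFint : IntegrableOn (fun x => r * F x) (Ico a b) volume :=
    ((hFcont.const_smul r).integrableOn_Icc).mono_set Ico_subset_Icc_self
  have hterm1 : ∫⁻ x in Ico a b,
        ENNReal.ofReal (r * Real.exp (-(r*x)) * Real.exp (-(s * g x))) ∂volume
      = ENNReal.ofReal ((1/lsr) * ∫ x in a..b, F x) := by
    have hcongr : ∀ x ∈ Ico a b,
        ENNReal.ofReal (r * Real.exp (-(r*x)) * Real.exp (-(s * g x)))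
          = ENNReal.ofReal (r * F x) := by
      intro x hx
      have hx0 : (0:ℝ) < x := lt_of_lt_of_le ha hx.1
      have hx' : θ * PSm * x ≤ PRm := by
        have := hx.2
        rw [hb_def, lt_div_iff₀ (by positivity : (0:ℝ) < θ * PSm)] at this
        nlinarith
      have hgx : g x = N0 * ζ / (θ * PSm * x) := by
        simp only [hg_def, min_eq_left hx']
      congr 1
      rw [hgx, mul_assoc, ← Real.exp_add, hF_def]
      congr 2
      rw [hr_def, hs_def]
      field_simp
      ring
    rw [setLIntegral_congr_fun measurableSet_Ico hcongr,
      ← ofReal_integral_eq_lintegral_ofReal hFint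
        (ae_of_all _ fun x => by positivity)]
    congr 1
    rw [MeasureTheory.integral_const_mul, hr_def, one_div,
      intervalIntegral.integral_of_le hab, setIntegral_congr_set (Ico_ae_eq_Ioc)]
  -- finish
  have hA : 0 ≤ (1/lsr) * ∫ x in a..b, F x :=
    mul_nonneg (by positivity)
      (intervalIntegral.integral_nonneg hab (fun x _ => Real.exp_nonneg _))
  rw [hP, hslice, hmain, hsplit, hterm1, hterm2,
    ← ENNReal.ofReal_add hA (Real.exp_nonneg _),
    ENNReal.toReal_ofReal (by positivity)]
end

section
/- Let X and Y be independent exponential random variables with means λ_sr > 0 and λ_rd > 0 respectively, and let P_Sm, P_Rm, θ, ζ, N_0 > 0 satisfy P_Rm/(θ·P_Sm) < N_0·ζ/P_Sm. Then P( P_Sm·X/N_0 ≥ ζ and min(θ·P_Sm·X, P_Rm)·Y/N_0 ≥ ζ ) = exp( −( N_0·ζ/(P_Sm·λ_sr) + N_0·ζ/(P_Rm·λ_rd) ) ). -/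
open MeasureTheory ProbabilityTheory Set Real

lemma expMeasure_tail {r a : ℝ} (hr : 0 < r) (ha : 0 ≤ a) :
    expMeasure r (Ici a) = ENNReal.ofReal (Real.exp (-(r * a))) := by
  have hprob := isProbabilityMeasure_expMeasure hr
  have hIic : expMeasure r (Iic a) = ENNReal.ofReal (1 - Real.exp (-(r * a))) := by
    rw [← ofReal_cdf, cdf_expMeasure_eq hr, if_pos ha]
  have hsing : expMeasure r {a} = 0 := by
    rw [expMeasure, gammaMeasure, withDensity_apply _ (measurableSet_singleton a)]
    simp
  have hIio : expMeasure r (Iio a) = ENNReal.ofReal (1 - Real.exp (-(r * a))) := by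
    have : expMeasure r (Iic a) = expMeasure r (Iio a) + expMeasure r {a} := by
      rw [← measure_union (by simp) (measurableSet_singleton a), Set.Iio_union_right]
    rw [hsing, add_zero] at this
    rw [← this, hIic]
  have hcompl : expMeasure r (Ici a) = 1 - expMeasure r (Iio a) := by
    rw [← compl_Iio, measure_compl measurableSet_Iio (measure_ne_top _ _), measure_univ]
  have hle : Real.exp (-(r * a)) ≤ 1 :=
    Real.exp_le_one_iff.mpr (by nlinarith)
  rw [hcompl, hIio]
  rw [show (1 : ENNReal) = ENNReal.ofReal 1 by simp,
    ← ENNReal.ofReal_sub _ (by linarith [Real.exp_pos (-(r * a))])]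
  norm_num

theorem noise_dominant_case_II
    {Ω : Type*} [MeasureSpace Ω] [IsProbabilityMeasure (ℙ : Measure Ω)]
    (X Y : Ω → ℝ) (hXm : Measurable X) (hYm : Measurable Y)
    (lsr lrd : ℝ) (hlsr : 0 < lsr) (hlrd : 0 < lrd)
    (hX : Measure.map X ℙ = expMeasure lsr⁻¹)
    (hY : Measure.map Y ℙ = expMeasure lrd⁻¹)
    (hind : IndepFun X Y ℙ)
    (PSm PRm θ ζ N0 : ℝ)
    (hPSm : 0 < PSm) (hPRm : 0 < PRm) (hθ : 0 < θ) (hζ : 0 < ζ) (hN0 : 0 < N0)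
    (hcase : PRm / (θ * PSm) < N0 * ζ / PSm) :
    ℙ {ω | PSm * X ω / N0 ≥ ζ ∧ min (θ * PSm * X ω) PRm * Y ω / N0 ≥ ζ} =
      ENNReal.ofReal
        (Real.exp (-(N0 * ζ / (PSm * lsr) + N0 * ζ / (PRm * lrd)))) := by
  set a : ℝ := N0 * ζ / PSm with ha_def
  set b : ℝ := N0 * ζ / PRm with hb_def
  have ha : 0 < a := by positivity
  have hb : 0 < b := by positivity
  have hPRm_lt : PRm < θ * (N0 * ζ) := by
    have := (div_lt_div_iff₀ (by positivity) hPSm).mp hcase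
    nlinarith
  have h1 : ∀ x : ℝ, (PSm * x / N0 ≥ ζ ↔ a ≤ x) := by
    intro x
    rw [ge_iff_le, le_div_iff₀ hN0, ha_def, div_le_iff₀ hPSm]
    constructor <;> intro h <;> nlinarith
  have h2 : ∀ y : ℝ, (PRm * y / N0 ≥ ζ ↔ b ≤ y) := by
    intro y
    rw [ge_iff_le, le_div_iff₀ hN0, hb_def, div_le_iff₀ hPRm]
    constructor <;> intro h <;> nlinarith
  have hmin : ∀ x : ℝ, a ≤ x → min (θ * PSm * x) PRm = PRm := by
    intro x hx
    apply min_eq_right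
    have : θ * (N0 * ζ) ≤ θ * PSm * x := by
      rw [ha_def] at hx
      rw [div_le_iff₀ hPSm] at hx
      nlinarith
    linarith
  have hset : {ω | PSm * X ω / N0 ≥ ζ ∧ min (θ * PSm * X ω) PRm * Y ω / N0 ≥ ζ}
      = X ⁻¹' (Ici a) ∩ Y ⁻¹' (Ici b) := by
    ext ω
    simp only [mem_setOf_eq, mem_inter_iff, mem_preimage, mem_Ici]
    constructor
    · rintro ⟨hx, hy⟩
      have hxa : a ≤ X ω := (h1 _).mp hx
      rw [hmin _ hxa] at hy
      exact ⟨hxa, (h2 _).mp hy⟩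
    · rintro ⟨hxa, hyb⟩
      refine ⟨(h1 _).mpr hxa, ?_⟩
      rw [hmin _ hxa]
      exact (h2 _).mpr hyb
  rw [hset, hind.measure_inter_preimage_eq_mul _ _ measurableSet_Ici measurableSet_Ici,
    ← Measure.map_apply hXm measurableSet_Ici, ← Measure.map_apply hYm measurableSet_Ici,
    hX, hY, expMeasure_tail (by positivity) ha.le, expMeasure_tail (by positivity) hb.le,
    ← ENNReal.ofReal_mul (Real.exp_pos _).le, ← Real.exp_add]
  congr 1
  rw [ha_def, hb_def]
  field_simp
  ring
end
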